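/- Orthogonal array construction (c = 1 case): let Δ_1, …, Δ_m be 2-designs, where Δ_i is a 2-(v_i, k_i, λ_i) design with b_i blocks, and let Γ be an orthogonal array of strength 2 with s rows and m columns, column i having b_i symbols (each symbol of column i appearing equally often, and each ordered pair of symbols from two columns appearing equally often). Index the blocks of Δ_i by the symbols of column i. Then the s blocks (B_1(ρ),…,B_m(ρ)) for ρ ranging over rows of Γ, where B_i(ρ) is the block of Δ_i indexed by the entry of row ρ in column i, form an m-part 2-design of strength 2. -/

import Mathlib

open Finset

/-- Orthogonal array construction (c = 1): given 2-(v_i,k_i,λ_i) designs Δ_i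
with b_i blocks and an orthogonal array Γ of strength 2 with s rows and m
columns, column i having b_i symbols, the s blocks obtained by combining, for
each row ρ, the blocks of the Δ_i indexed by the entries of ρ form an m-part
2-design of strength 2. -/
theorem orthogonal_array_construction
    (m s : ℕ) (hs : 0 < s)
    (v k lam bnum : Fin m → ℕ)
    (Bl : ∀ i : Fin m, Fin (bnum i) → Finset (Fin (v i)))
    (hcard : ∀ i a, (Bl i a).card = k i)
    (hkv : ∀ i, 1 < k i ∧ k i < v i)
    (hlam : ∀ i, 0 < lam i)
    (hdes : ∀ (i : Fin m) (x y : Fin (v i)), x ≠ y →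
      (Finset.univ.filter (fun a => x ∈ Bl i a ∧ y ∈ Bl i a)).card = lam i)
    (Γ : Fin s → ∀ i : Fin m, Fin (bnum i))
    -- each symbol appears s / b_i times in column i
    (hsym : ∀ (i : Fin m) (a : Fin (bnum i)),
      (Finset.univ.filter (fun ρ => Γ ρ i = a)).card * bnum i = s)
    -- strength 2: each ordered pair of symbols appears equally often in each
    -- ordered pair of distinct columns
    (hOA : ∀ i j : Fin m, i ≠ j → ∀ (a : Fin (bnum i)) (c : Fin (bnum j)),
      (Finset.univ.filter (fun ρ => Γ ρ i = a ∧ Γ ρ j = c)).card *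
        (bnum i * bnum j) = s) :
    -- within-factor concurrences are constant and positive
    (∀ i : Fin m, ∃ l > 0, ∀ x y : Fin (v i), x ≠ y →
      (Finset.univ.filter (fun ρ : Fin s =>
        x ∈ Bl i (Γ ρ i) ∧ y ∈ Bl i (Γ ρ i))).card = l) ∧
    -- cross-factor concurrences are constant
    (∀ i j : Fin m, i ≠ j → ∃ l, ∀ (x : Fin (v i)) (y : Fin (v j)),
      (Finset.univ.filter (fun ρ : Fin s =>
        x ∈ Bl i (Γ ρ i) ∧ y ∈ Bl j (Γ ρ j))).card = l) := by
  classical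
  have ρ0 : Fin s := ⟨0, hs⟩
  have hb : ∀ i, 0 < bnum i := fun i => Fin.pos_iff_nonempty.mpr ⟨Γ ρ0 i⟩
  -- fiber counts in single columns
  have hfib : ∀ (i : Fin m) (a : Fin (bnum i)),
      (Finset.univ.filter (fun ρ => Γ ρ i = a)).card = s / bnum i := by
    intro i a
    exact (Nat.div_eq_of_eq_mul_left (hb i) (hsym i a).symm).symm
  have hspos : ∀ i : Fin m, 0 < s / bnum i := by
    intro i
    have h1 := hsym i (Γ ρ0 i)
    rw [hfib i (Γ ρ0 i)] at h1
    rcases Nat.eq_zero_or_pos (s / bnum i) with h | h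
    · rw [h] at h1; simp at h1; omega
    · exact h
  -- fiber counts for pairs of columns
  have hfib2 : ∀ (i j : Fin m), i ≠ j → ∀ (a : Fin (bnum i)) (c : Fin (bnum j)),
      (Finset.univ.filter (fun ρ => Γ ρ i = a ∧ Γ ρ j = c)).card
        = s / (bnum i * bnum j) := by
    intro i j hij a c
    exact (Nat.div_eq_of_eq_mul_left (Nat.mul_pos (hb i) (hb j))
      (hOA i j hij a c).symm).symm
  -- replication numbers
  have hrep : ∀ (i : Fin m) (x : Fin (v i)),
      (Finset.univ.filter (fun a => x ∈ Bl i a)).card * (k i - 1)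
        = lam i * (v i - 1) := by
    intro i x
    set P : Finset (Fin (bnum i) × Fin (v i)) :=
      Finset.univ.filter (fun p => x ∈ Bl i p.1 ∧ p.2 ∈ Bl i p.1 ∧ p.2 ≠ x) with hP
    have h1 : P.card = ∑ a ∈ Finset.univ.filter (fun a => x ∈ Bl i a),
        (P.filter (fun p => p.1 = a)).card := by
      apply Finset.card_eq_sum_card_fiberwise
      intro p hp
      simp only [hP, Finset.mem_coe, Finset.mem_filter, Finset.mem_univ, true_and] at hp ⊢
      exact hp.1
    have h2 : P.card = ∑ y ∈ Finset.univ.filter (fun y => y ≠ x),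
        (P.filter (fun p => p.2 = y)).card := by
      apply Finset.card_eq_sum_card_fiberwise
      intro p hp
      simp only [hP, Finset.mem_coe, Finset.mem_filter, Finset.mem_univ, true_and] at hp ⊢
      exact hp.2.2
    have e1 : ∀ a ∈ Finset.univ.filter (fun a => x ∈ Bl i a),
        (P.filter (fun p => p.1 = a)).card = k i - 1 := by
      intro a ha
      simp only [Finset.mem_filter, Finset.mem_univ, true_and] at ha
      have : P.filter (fun p => p.1 = a) = {a} ×ˢ ((Bl i a).erase x) := by
        ext p
        simp only [hP, Finset.mem_filter, Finset.mem_univ, true_and,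
          Finset.mem_product, Finset.mem_singleton, Finset.mem_erase]
        constructor
        · rintro ⟨⟨_, h2, h3⟩, h4⟩; subst h4; exact ⟨rfl, h3, h2⟩
        · rintro ⟨h4, h3, h2⟩; subst h4; exact ⟨⟨ha, h2, h3⟩, rfl⟩
      rw [this, Finset.card_product, Finset.card_singleton, one_mul,
        Finset.card_erase_of_mem ha, hcard]
    have e2 : ∀ y ∈ Finset.univ.filter (fun y => y ≠ x),
        (P.filter (fun p => p.2 = y)).card = lam i := by
      intro y hy
      simp only [Finset.mem_filter, Finset.mem_univ, true_and] at hy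
      have : P.filter (fun p => p.2 = y)
          = (Finset.univ.filter (fun a => x ∈ Bl i a ∧ y ∈ Bl i a)) ×ˢ {y} := by
        ext p
        simp only [hP, Finset.mem_filter, Finset.mem_univ, true_and,
          Finset.mem_product, Finset.mem_singleton]
        constructor
        · rintro ⟨⟨h1', h2', h3'⟩, h4⟩; subst h4; exact ⟨⟨h1', h2'⟩, rfl⟩
        · rintro ⟨⟨h1', h2'⟩, h4⟩; subst h4; exact ⟨⟨h1', h2', hy⟩, rfl⟩
      rw [this, Finset.card_product, Finset.card_singleton, mul_one,
        hdes i x y (Ne.symm hy)]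
    rw [Finset.sum_congr rfl e1, Finset.sum_const, smul_eq_mul] at h1
    rw [Finset.sum_congr rfl e2, Finset.sum_const, smul_eq_mul] at h2
    have hY : (Finset.univ.filter (fun y => y ≠ x)).card = v i - 1 := by
      have : (Finset.univ.filter (fun y => y ≠ x)) = Finset.univ.erase x := by
        ext y; simp [Finset.mem_erase]
      rw [this, Finset.card_erase_of_mem (Finset.mem_univ x), Finset.card_univ,
        Fintype.card_fin]
    rw [h1] at h2
    rw [h2, hY, mul_comm]
  have hk1 : ∀ i : Fin m, 0 < k i - 1 := fun i => by have := (hkv i).1; omega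
  have hrepc : ∀ (i : Fin m) (x : Fin (v i)),
      (Finset.univ.filter (fun a => x ∈ Bl i a)).card
        = lam i * (v i - 1) / (k i - 1) := by
    intro i x
    exact (Nat.div_eq_of_eq_mul_left (hk1 i) (hrep i x).symm).symm
  constructor
  · -- within-factor
    intro i
    refine ⟨lam i * (s / bnum i), Nat.mul_pos (hlam i) (hspos i), ?_⟩
    intro x y hxy
    have h1 : (Finset.univ.filter (fun ρ : Fin s =>
        x ∈ Bl i (Γ ρ i) ∧ y ∈ Bl i (Γ ρ i))).card
        = ∑ a ∈ Finset.univ.filter (fun a => x ∈ Bl i a ∧ y ∈ Bl i a),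
          ((Finset.univ.filter (fun ρ : Fin s =>
            x ∈ Bl i (Γ ρ i) ∧ y ∈ Bl i (Γ ρ i))).filter
              (fun ρ => Γ ρ i = a)).card := by
      apply Finset.card_eq_sum_card_fiberwise
      intro ρ hρ
      simp only [Finset.mem_coe, Finset.mem_filter, Finset.mem_univ, true_and] at hρ ⊢
      exact hρ
    rw [h1]
    have e1 : ∀ a ∈ Finset.univ.filter (fun a => x ∈ Bl i a ∧ y ∈ Bl i a),
        ((Finset.univ.filter (fun ρ : Fin s =>
          x ∈ Bl i (Γ ρ i) ∧ y ∈ Bl i (Γ ρ i))).filter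
            (fun ρ => Γ ρ i = a)).card = s / bnum i := by
      intro a ha
      simp only [Finset.mem_filter, Finset.mem_univ, true_and] at ha
      have : ((Finset.univ.filter (fun ρ : Fin s =>
          x ∈ Bl i (Γ ρ i) ∧ y ∈ Bl i (Γ ρ i))).filter (fun ρ => Γ ρ i = a))
          = Finset.univ.filter (fun ρ => Γ ρ i = a) := by
        ext ρ
        simp only [Finset.mem_filter, Finset.mem_univ, true_and]
        constructor
        · rintro ⟨_, h⟩; exact h
        · intro h; rw [h]; exact ⟨ha, rfl⟩
      rw [this, hfib]
    rw [Finset.sum_congr rfl e1, Finset.sum_const, smul_eq_mul, hdes i x y hxy]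
  · -- cross-factor
    intro i j hij
    refine ⟨(lam i * (v i - 1) / (k i - 1)) * (lam j * (v j - 1) / (k j - 1))
      * (s / (bnum i * bnum j)), ?_⟩
    intro x y
    have h1 : (Finset.univ.filter (fun ρ : Fin s =>
        x ∈ Bl i (Γ ρ i) ∧ y ∈ Bl j (Γ ρ j))).card
        = ∑ p ∈ (Finset.univ.filter (fun a => x ∈ Bl i a)) ×ˢ
            (Finset.univ.filter (fun c => y ∈ Bl j c)),
          ((Finset.univ.filter (fun ρ : Fin s =>
            x ∈ Bl i (Γ ρ i) ∧ y ∈ Bl j (Γ ρ j))).filter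
              (fun ρ => (Γ ρ i, Γ ρ j) = p)).card := by
      apply Finset.card_eq_sum_card_fiberwise
      intro ρ hρ
      simp only [Finset.mem_coe, Finset.mem_filter, Finset.mem_univ, true_and,
        Finset.mem_product] at hρ ⊢
      exact hρ
    rw [h1]
    have e1 : ∀ p ∈ (Finset.univ.filter (fun a => x ∈ Bl i a)) ×ˢ
            (Finset.univ.filter (fun c => y ∈ Bl j c)),
        ((Finset.univ.filter (fun ρ : Fin s =>
          x ∈ Bl i (Γ ρ i) ∧ y ∈ Bl j (Γ ρ j))).filter
            (fun ρ => (Γ ρ i, Γ ρ j) = p)).card = s / (bnum i * bnum j) := by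
      rintro ⟨a, c⟩ hp
      simp only [Finset.mem_product, Finset.mem_filter, Finset.mem_univ,
        true_and] at hp
      have : ((Finset.univ.filter (fun ρ : Fin s =>
          x ∈ Bl i (Γ ρ i) ∧ y ∈ Bl j (Γ ρ j))).filter
            (fun ρ => (Γ ρ i, Γ ρ j) = (a, c)))
          = Finset.univ.filter (fun ρ => Γ ρ i = a ∧ Γ ρ j = c) := by
        ext ρ
        simp only [Finset.mem_filter, Finset.mem_univ, true_and, Prod.mk.injEq]
        constructor
        · rintro ⟨_, h⟩; exact h
        · rintro ⟨h1', h2'⟩; rw [h1', h2']; exact ⟨⟨hp.1, hp.2⟩, rfl, rfl⟩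
      rw [this, hfib2 i j hij]
    rw [Finset.sum_congr rfl e1, Finset.sum_const, smul_eq_mul,
      Finset.card_product, hrepc i x, hrepc j y]
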